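/- Define g^m_{ℓ,n} = ∫_{−1}^{1} P_ℓ^m(x) P_n^m(x) / √(1 − x²) dx for integers m ≤ min{ℓ, n}. Then for every m ∈ ℕ: g^m_{m,m} = π (2m)! · (4^{−m} C(2m, m))², where C(a, b) denotes the binomial coefficient. -/

import Mathlib

open MeasureTheory

/-- The Legendre polynomial via the Rodrigues formula
`P_n(x) = (1/(2^n n!)) dⁿ/dxⁿ (x² − 1)ⁿ`. -/
noncomputable def legendreP (n : ℕ) (x : ℝ) : ℝ :=
  (1 / ((2 : ℝ) ^ n * Nat.factorial n)) * iteratedDeriv n (fun y : ℝ => (y ^ 2 - 1) ^ n) x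

/-- The associated Legendre function on `(−1,1)`:
`P_n^m(x) = (−1)^m (1 − x²)^{m/2} dᵐ/dxᵐ P_n(x)`. -/
noncomputable def assocLegendreP (n m : ℕ) (x : ℝ) : ℝ :=
  (-1 : ℝ) ^ m * (1 - x ^ 2) ^ ((m : ℝ) / 2) * iteratedDeriv m (legendreP n) x

/-- `g^m_{ℓ,n} = ∫_{−1}^{1} P_ℓ^m(x) P_n^m(x)/√(1 − x²) dx`. -/
noncomputable def gInt (m l n : ℕ) : ℝ :=
  ∫ x in (-1 : ℝ)..1, assocLegendreP l m x * assocLegendreP n m x / Real.sqrt (1 - x ^ 2)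

section Aux

open Polynomial Real Set intervalIntegral

theorem iteratedDeriv_polyeval (p : ℝ[X]) (n : ℕ) :
    iteratedDeriv n (fun x => p.eval x) = fun x => (derivative^[n] p).eval x := by
  induction n generalizing p with
  | zero => simp
  | succ n ih =>
    rw [iteratedDeriv_succ']
    have h : (deriv fun x => eval x p) = fun x => eval x (derivative p) :=
      funext fun x => Polynomial.deriv p
    rw [h, ih (derivative p), Function.iterate_succ_apply]

theorem iterate_deriv_legP (m : ℕ) :
    derivative^[2 * m] ((X ^ 2 - 1 : ℝ[X]) ^ m) = C ((Nat.factorial (2 * m) : ℝ)) := by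
  set p : ℝ[X] := (X ^ 2 - 1) ^ m with hp
  have hmonic : p.Monic := by
    have h : (X ^ 2 - 1 : ℝ[X]) = X ^ 2 - C 1 := by simp
    rw [hp, h]
    exact (monic_X_pow_sub_C (1 : ℝ) two_ne_zero).pow m
  have hdeg : p.natDegree = 2 * m := by
    have : (X ^ 2 - 1 : ℝ[X]) = X ^ 2 - C 1 := by simp
    rw [hp, this, natDegree_pow, natDegree_X_pow_sub_C, mul_comm]
  have hq : (derivative^[2 * m] p).natDegree = 0 := by
    have := natDegree_iterate_derivative p (2 * m)
    omega
  rw [Polynomial.eq_C_of_natDegree_eq_zero hq, coeff_iterate_derivative,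
    Nat.zero_add, ← hdeg, Polynomial.coeff_natDegree, hmonic.leadingCoeff]
  simp [Nat.descFactorial_self, hdeg]

theorem key_const (m : ℕ) (x : ℝ) :
    iteratedDeriv m (legendreP m) x = (Nat.factorial (2 * m) : ℝ) / (2 ^ m * Nat.factorial m) := by
  have h1 : legendreP m = fun x =>
      (C (1 / ((2 : ℝ) ^ m * Nat.factorial m)) * derivative^[m] ((X ^ 2 - 1) ^ m)).eval x := by
    funext y
    have h2 : (fun y : ℝ => (y ^ 2 - 1) ^ m) = fun y => ((X ^ 2 - 1 : ℝ[X]) ^ m).eval y := by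
      funext z; simp
    rw [legendreP, h2, iteratedDeriv_polyeval]
    simp
  rw [h1, iteratedDeriv_polyeval, iterate_derivative_C_mul, ← Function.iterate_add_apply]
  have h2 : m + m = 2 * m := by ring
  rw [h2, iterate_deriv_legP]
  simp
  ring

theorem wallis (m : ℕ) : (∫ x in (-(π/2))..(π/2), Real.cos x ^ (2*m))
    = π * (Nat.choose (2*m) m) / 4 ^ m := by
  induction m with
  | zero => simp
  | succ k ih =>
    have h2 : 2 * (k + 1) = 2 * k + 2 := by ring
    rw [h2, integral_cos_pow, Real.cos_pi_div_two]
    rw [Real.cos_neg, Real.cos_pi_div_two]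
    simp only [zero_pow (Nat.succ_ne_zero _), zero_mul, sub_zero, mul_zero, zero_sub, neg_zero,
      zero_div, zero_add]
    rw [ih]
    have hc : (Nat.choose (2 * (k+1)) (k+1) : ℝ) * ((k+1) * (k+1)) =
        (Nat.choose (2*k) k : ℝ) * ((2*k+1) * (2*k+2)) := by
      have e1 := Nat.succ_mul_centralBinom_succ k
      have e2 : (k+1) * Nat.centralBinom (k+1) = 2 * (2*k+1) * Nat.centralBinom k := e1
      have := congrArg (fun n : ℕ => (n : ℝ)) e2
      push_cast [Nat.centralBinom] at this ⊢
      nlinarith [this]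
    have hk1 : ((k:ℝ)+1) ≠ 0 := by positivity
    have hd : (Nat.choose (2*(k+1)) (k+1) : ℝ) * (k+1) = 2 * (2*k+1) * Nat.choose (2*k) k := by
      apply mul_right_cancel₀ hk1
      push_cast at hc ⊢
      nlinarith [hc]
    rw [h2] at hd
    rw [show ((Nat.choose (2*k+2) (k+1)) : ℝ) = 2 * (2*k+1) * Nat.choose (2*k) k / (k+1) from by
      rw [eq_div_iff hk1]; exact hd]
    push_cast
    field_simp
    ring

theorem J_int (m : ℕ) (hm : 1 ≤ m) :
    (∫ x in (-1 : ℝ)..1, (1 - x ^ 2) ^ ((m : ℝ) - 1/2))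
      = π * (Nat.choose (2*m) m) / 4 ^ m := by
  have hg : Continuous fun u : ℝ => (1 - u ^ 2) ^ ((m : ℝ) - 1/2) := by
    rw [continuous_iff_continuousAt]
    intro u
    exact (Real.continuousAt_rpow_const _ _ (Or.inr (by
      have : (1:ℝ) ≤ m := by exact_mod_cast hm
      linarith))).comp (by fun_prop)
  have hsub := intervalIntegral.integral_comp_smul_deriv
    (f := Real.sin) (f' := Real.cos) (a := -(π/2)) (b := π/2)
    (g := fun u : ℝ => (1 - u ^ 2) ^ ((m : ℝ) - 1/2))
    (fun x _ => Real.hasDerivAt_sin x) Real.continuousOn_cos hg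
  rw [Real.sin_pi_div_two, Real.sin_neg, Real.sin_pi_div_two] at hsub
  rw [← hsub, ← wallis m]
  apply intervalIntegral.integral_congr
  intro θ hθ
  have hθ' : θ ∈ Icc (-(π/2)) (π/2) := by
    rwa [Set.uIcc_of_le (by linarith [Real.pi_pos] : -(π/2) ≤ π/2)] at hθ
  have hcos : 0 ≤ Real.cos θ := Real.cos_nonneg_of_mem_Icc hθ'
  have h1 : (1 : ℝ) - Real.sin θ ^ 2 = Real.cos θ ^ 2 := (Real.cos_sq' θ).symm
  simp only [Function.comp, smul_eq_mul]
  rw [h1]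
  have h2 : (Real.cos θ ^ 2 : ℝ) = Real.cos θ ^ ((2 : ℕ) : ℝ) := (Real.rpow_natCast _ 2).symm
  rw [h2, ← Real.rpow_mul hcos]
  have h3 : ((2 : ℕ) : ℝ) * ((m : ℝ) - 1/2) = ((2 * m - 1 : ℕ) : ℝ) := by
    have : (1:ℕ) ≤ 2 * m := by omega
    push_cast [this]
    ring
  rw [h3, Real.rpow_natCast, ← pow_succ']
  congr 1
  omega

end Aux

/-- For every `m ∈ ℕ`: `g^m_{m,m} = π (2m)!·(4^{−m} C(2m,m))²`. -/
theorem gInt_diag_start (m : ℕ) :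
    gInt m m m
      = Real.pi * Nat.factorial (2 * m) *
          ((Nat.choose (2 * m) m : ℝ) / 4 ^ m) ^ 2 := by
  rcases Nat.eq_zero_or_pos m with hm | hm
  · subst hm
    have h0 : ∀ x : ℝ, assocLegendreP 0 0 x = 1 := by
      intro x
      simp [assocLegendreP, legendreP]
    have h1 : gInt 0 0 0 = ∫ x in (-1:ℝ)..1, 1 / Real.sqrt (1 - x ^ 2) := by
      unfold gInt
      congr 1
      funext x
      rw [h0 x]
      ring_nf
    rw [h1]
    have harcsin : (∫ x in (-1:ℝ)..1, 1 / Real.sqrt (1 - x ^ 2))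
        = Real.arcsin 1 - Real.arcsin (-1) := by
      apply intervalIntegral.integral_eq_sub_of_hasDeriv_right
      · exact Real.continuous_arcsin.continuousOn
      · intro x hx
        simp only [min_eq_left, max_eq_right, show (-1:ℝ) ≤ 1 by norm_num] at hx
        have hx' : x ∈ Set.Ioo (-1:ℝ) 1 := by
          constructor <;> [exact hx.1; exact hx.2]
        exact (Real.hasDerivAt_arcsin (ne_of_gt hx'.1) (ne_of_lt hx'.2)).hasDerivWithinAt
      · apply intervalIntegral.intervalIntegrable_deriv_of_nonneg
          Real.continuous_arcsin.continuousOn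
        · intro x hx
          simp only [min_eq_left, max_eq_right, show (-1:ℝ) ≤ 1 by norm_num] at hx
          exact Real.hasDerivAt_arcsin (ne_of_gt hx.1) (ne_of_lt hx.2)
        · intro x _
          positivity
    rw [harcsin, Real.arcsin_one, Real.arcsin_neg_one]
    norm_num
  · -- m ≥ 1
    set c : ℝ := (Nat.factorial (2 * m) : ℝ) / (2 ^ m * Nat.factorial m) with hc
    have hstep : gInt m m m = ∫ x in (-1:ℝ)..1, c ^ 2 * (1 - x ^ 2) ^ ((m:ℝ) - 1/2) := by
      unfold gInt
      apply intervalIntegral.integral_congr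
      intro x hx
      have hx' : x ∈ Set.Icc (-1:ℝ) 1 := by
        rwa [Set.uIcc_of_le (by norm_num : (-1:ℝ) ≤ 1)] at hx
      have ht : (0:ℝ) ≤ 1 - x ^ 2 := by nlinarith [hx'.1, hx'.2]
      unfold assocLegendreP
      simp only []
      rw [key_const, ← hc]
      have hsq : ((-1:ℝ) ^ m * (1 - x ^ 2) ^ ((m:ℝ)/2) * c)
          * ((-1:ℝ) ^ m * (1 - x ^ 2) ^ ((m:ℝ)/2) * c)
          = (1 - x ^ 2) ^ ((m:ℝ)/2) * (1 - x ^ 2) ^ ((m:ℝ)/2) * c ^ 2 := by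
        have : ((-1:ℝ) ^ m) * ((-1:ℝ) ^ m) = 1 := by
          rw [← pow_add]
          exact (neg_one_pow_eq_one_iff_even (by norm_num)).2 ⟨m, rfl⟩
        nlinarith [this]
      rw [hsq]
      have hadd : (1 - x ^ 2) ^ ((m:ℝ)/2) * (1 - x ^ 2) ^ ((m:ℝ)/2)
          = (1 - x ^ 2) ^ (m:ℝ) := by
        rw [← Real.rpow_add' ht (by
          have : (1:ℝ) ≤ m := by exact_mod_cast hm
          intro h; rw [← add_div] at h; nlinarith)]
        norm_num
      rw [hadd, Real.sqrt_eq_rpow,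
        div_eq_mul_inv, ← Real.rpow_neg ht, mul_assoc, mul_comm (c^2), ← mul_assoc,
        ← Real.rpow_add' ht (by
          have : (1:ℝ) ≤ m := by exact_mod_cast hm
          intro h; nlinarith)]
      ring_nf
    rw [hstep, intervalIntegral.integral_const_mul, J_int m hm]
    have hfac : (Nat.choose (2*m) m : ℝ) * Nat.factorial m * Nat.factorial m
        = Nat.factorial (2 * m) := by
      have := Nat.choose_mul_factorial_mul_factorial (show m ≤ 2 * m by omega)
      have h2 : 2 * m - m = m := by omega
      rw [h2] at this
      push_cast [← this]
      ring
    have hmfac : (Nat.factorial m : ℝ) ≠ 0 := by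
      exact_mod_cast Nat.factorial_ne_zero m
    have h4 : (4:ℝ) ^ m = (2:ℝ)^m * (2:ℝ)^m := by
      rw [← mul_pow]; norm_num
    rw [hc]
    rw [← hfac, h4]
    field_simp
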